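/- Moment bound on the consensus point: Let E : D̄ → ℝ be continuous with E(x) − inf E ≥ c_l(|x|² − 1) and E(x) − inf E ≤ c_u(|x|² + 1) for all x ∈ D̄, where c_l, c_u > 0. Then for each p ≥ 1 and α > 0 there exists a constant c₁ > 0 depending only on c_u, c_l, p, α such that for every probability measure ρ on D̄ with finite p-th moment, |X_α(ρ)| ≤ (c₁ ∫_{D̄} |x|^p dρ(x))^{1/p}, where X_α(ρ) = (∫ x e^{-αE(x)} dρ(x)) / (∫ e^{-αE(x)} dρ(x)). -/

import Mathlib

open MeasureTheory Filter

lemma memℒp_of_int_rpow {X : Type*} [MeasurableSpace X] {μ : Measure X} {p : ℝ} (hp : 0 < p)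
    {f : X → ℝ} (hfm : AEStronglyMeasurable f μ)
    (hf : Integrable (fun x => |f x| ^ p) μ) : MemLp f (ENNReal.ofReal p) μ := by
  have h0 : ENNReal.ofReal p ≠ 0 := by simp [hp, not_le.mpr hp]
  have ht : ENNReal.ofReal p ≠ ⊤ := ENNReal.ofReal_ne_top
  have := (memLp_norm_rpow_iff (p := ENNReal.ofReal p) hfm h0 ht).mp ?_
  · exact this
  · rw [ENNReal.div_self h0 ht]
    rw [memLp_one_iff_integrable]
    simpa [ENNReal.toReal_ofReal hp.le, Real.norm_eq_abs] using hf

lemma jensen_weighted {X : Type*} [MeasurableSpace X] {μ : Measure X} {p : ℝ} (hp : 1 ≤ p)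
    {f w : X → ℝ} (hf0 : ∀ᵐ x ∂μ, 0 ≤ f x) (hw0 : ∀ x, 0 < w x)
    (hfm : AEStronglyMeasurable f μ) (hwm : AEStronglyMeasurable w μ)
    (hw : Integrable w μ) (hfp : Integrable (fun x => f x ^ p * w x) μ) :
    ∫ x, f x * w x ∂μ ≤ (∫ x, f x ^ p * w x ∂μ) ^ (1/p) * (∫ x, w x ∂μ) ^ (1 - 1/p) := by
  rcases hp.eq_or_lt with heq | hp1
  · subst heq; simp [Real.rpow_one]
  have hp0 : (0:ℝ) < p := lt_trans one_pos hp1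
  set q := Real.conjExponent p with hq
  have hpq : p.HolderConjugate q := Real.HolderConjugate.conjExponent hp1
  have hq0 : (0:ℝ) < q := hpq.symm.pos
  have hsum : 1/p + 1/q = 1 := by
    rw [one_div, one_div]; exact hpq.inv_add_inv_eq_one
  have h1q : 1 - 1/p = 1/q := by linarith
  set F : X → ℝ := fun x => f x * w x ^ (1/p) with hF
  set G : X → ℝ := fun x => w x ^ (1/q) with hG
  have hwm' : AEMeasurable w μ := hwm.aemeasurable
  have hFm : AEStronglyMeasurable F μ :=
    (hfm.aemeasurable.mul (hwm'.pow aemeasurable_const)).aestronglyMeasurable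
  have hGm : AEStronglyMeasurable G μ :=
    (hwm'.pow aemeasurable_const).aestronglyMeasurable
  have hFp : ∀ᵐ x ∂μ, F x ^ p = f x ^ p * w x := by
    filter_upwards [hf0] with x hx
    rw [hF, Real.mul_rpow hx (Real.rpow_nonneg (hw0 x).le _), ← Real.rpow_mul (hw0 x).le,
      one_div, inv_mul_cancel₀ hp0.ne', Real.rpow_one]
  have hGq : ∀ x, G x ^ q = w x := by
    intro x
    rw [hG, ← Real.rpow_mul (hw0 x).le, one_div, inv_mul_cancel₀ hq0.ne', Real.rpow_one]
  have hFG : ∀ x, F x * G x = f x * w x := by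
    intro x
    rw [hF, hG, mul_assoc, ← Real.rpow_add (hw0 x), hsum, Real.rpow_one]
  have hF0 : ∀ᵐ x ∂μ, 0 ≤ F x := by
    filter_upwards [hf0] with x hx
    exact mul_nonneg hx (Real.rpow_nonneg (hw0 x).le _)
  have hG0 : ∀ᵐ x ∂μ, 0 ≤ G x := Eventually.of_forall fun x => Real.rpow_nonneg (hw0 x).le _
  have hMF : MemLp F (ENNReal.ofReal p) μ := by
    apply memℒp_of_int_rpow hp0 hFm
    apply hfp.congr
    filter_upwards [hF0, hFp] with x hx hx2
    rw [abs_of_nonneg hx, hx2]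
  have hMG : MemLp G (ENNReal.ofReal q) μ := by
    apply memℒp_of_int_rpow hq0 hGm
    apply hw.congr
    filter_upwards [] with x
    rw [abs_of_nonneg (Real.rpow_nonneg (hw0 x).le _), hGq]
  have key := integral_mul_le_Lp_mul_Lq_of_nonneg hpq hF0 hG0 hMF hMG
  rw [show (fun x => F x * G x) = fun x => f x * w x from funext hFG] at key
  rw [show (fun x => G x ^ q) = fun x => w x from funext hGq] at key
  rw [integral_congr_ae hFp] at key
  rw [h1q]
  exact key

set_option maxHeartbeats 2000000 in
theorem stmt4 (cl cu p α : ℝ) (hcl : 0 < cl) (hcu : 0 < cu) (hp : 1 ≤ p) (hα : 0 < α) :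
    ∃ c₁ > 0, ∀ (d : ℕ) (D : Set (EuclideanSpace ℝ (Fin d))) (_ : IsClosed D)
      (E : EuclideanSpace ℝ (Fin d) → ℝ) (_ : ContinuousOn E D)
      (Einf : ℝ) (_ : IsGLB (E '' D) Einf)
      (_ : ∀ x ∈ D, cl * (‖x‖ ^ 2 - 1) ≤ E x - Einf)
      (_ : ∀ x ∈ D, E x - Einf ≤ cu * (‖x‖ ^ 2 + 1))
      (ρ : Measure (EuclideanSpace ℝ (Fin d))) (_ : IsProbabilityMeasure ρ)
      (_ : ρ Dᶜ = 0)
      (_ : Integrable (fun x => ‖x‖ ^ p) ρ),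
      ‖(∫ x, Real.exp (-α * E x) ∂ρ)⁻¹ • ∫ x, Real.exp (-α * E x) • x ∂ρ‖ ≤
        (c₁ * ∫ x, ‖x‖ ^ p ∂ρ) ^ (1 / p) := by
  have hp0 : (0:ℝ) < p := lt_of_lt_of_le one_pos hp
  obtain ⟨cs, hcs⟩ : ∃ c : ℝ, c = 2 * Real.exp (α * (cl + 5 * cu)) := ⟨_, rfl⟩
  obtain ⟨a, ha⟩ : ∃ c : ℝ, c = (cu / cl) * ((2:ℝ) ^ ((2:ℝ)/p) + 1) + 1 := ⟨_, rfl⟩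
  have hcs0 : 0 < cs := by rw [hcs]; positivity
  have ha0 : 0 < a := by rw [ha]; positivity
  refine ⟨cs ^ p + (a ^ (p/2) + 2), by
    linarith [Real.rpow_pos_of_pos hcs0 p, Real.rpow_pos_of_pos ha0 (p/2)], ?_⟩
  set c₁ : ℝ := cs ^ p + (a ^ (p/2) + 2) with hc₁
  have hc₁0 : 0 < c₁ := by
    rw [hc₁]
    linarith [Real.rpow_pos_of_pos hcs0 p, Real.rpow_pos_of_pos ha0 (p/2)]
  intro d D hDcl E hE Einf _hglb hlow hup ρ hρ hρD hint
  have hae : ∀ᵐ x ∂ρ, x ∈ D := by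
    rw [MeasureTheory.ae_iff]; exact hρD
  have hEm : AEMeasurable E ρ := by
    have := hE.aemeasurable (μ := ρ) hDcl.measurableSet
    rwa [Measure.restrict_eq_self_of_ae_mem hae] at this
  set h : EuclideanSpace ℝ (Fin d) → ℝ := fun x => Real.exp (-α * (E x - Einf)) with hh
  have hhm : AEMeasurable h ρ :=
    Real.measurable_exp.comp_aemeasurable ((hEm.sub aemeasurable_const).const_mul (-α))
  have hhsm : AEStronglyMeasurable h ρ := hhm.aestronglyMeasurable
  have hhpos : ∀ x, 0 < h x := fun x => Real.exp_pos _
  -- a.e. upper bound on h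
  have hub : ∀ᵐ x ∂ρ, h x ≤ Real.exp (α * cl) := by
    filter_upwards [hae] with x hx
    have h1 := hlow x hx
    have h2 : α * (cl * (‖x‖ ^ 2 - 1)) ≤ α * (E x - Einf) := mul_le_mul_of_nonneg_left h1 hα.le
    have h3 : (0:ℝ) ≤ α * cl * ‖x‖ ^ 2 := by positivity
    have : -α * (E x - Einf) ≤ α * cl := by nlinarith [h2, h3]
    exact Real.exp_le_exp.mpr this
  -- integrability facts
  have hint1 : Integrable (fun x => ‖x‖) ρ := by
    refine Integrable.mono' ((integrable_const (1:ℝ)).add hint)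
      continuous_norm.aestronglyMeasurable (Eventually.of_forall fun x => ?_)
    show ‖‖x‖‖ ≤ 1 + ‖x‖ ^ p
    rw [norm_norm]
    rcases le_total ‖x‖ 1 with hx1 | hx1
    · have : (0:ℝ) ≤ ‖x‖ ^ p := Real.rpow_nonneg (norm_nonneg _) _
      linarith
    · have h4 : ‖x‖ ^ (1:ℝ) ≤ ‖x‖ ^ p := Real.rpow_le_rpow_of_exponent_le hx1 hp
      rw [Real.rpow_one] at h4
      linarith
  have hinth : Integrable h ρ := by
    refine Integrable.mono' (integrable_const (Real.exp (α * cl))) hhsm ?_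
    filter_upwards [hub] with x hx
    rwa [Real.norm_eq_abs, abs_of_pos (hhpos x)]
  have hinthx : Integrable (fun x => h x • x) ρ := by
    refine Integrable.mono' (hint1.const_mul (Real.exp (α * cl)))
      (hhsm.smul aestronglyMeasurable_id) ?_
    filter_upwards [hub] with x hx
    rw [norm_smul, Real.norm_eq_abs, abs_of_pos (hhpos x)]
    exact mul_le_mul_of_nonneg_right hx (norm_nonneg _)
  have hnpm : AEStronglyMeasurable (fun x => ‖x‖ ^ p) ρ :=
    (continuous_norm.aemeasurable.pow aemeasurable_const).aestronglyMeasurable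
  have hintph : Integrable (fun x => ‖x‖ ^ p * h x) ρ := by
    refine Integrable.mono' (hint.const_mul (Real.exp (α * cl)))
      (hnpm.mul hhsm) ?_
    filter_upwards [hub] with x hx
    rw [Real.norm_eq_abs, abs_mul, abs_of_pos (hhpos x),
      abs_of_nonneg (Real.rpow_nonneg (norm_nonneg _) _), mul_comm (Real.exp (α * cl))]
    exact mul_le_mul_of_nonneg_left hx (Real.rpow_nonneg (norm_nonneg _) _)
  have hinthn : Integrable (fun x => ‖x‖ * h x) ρ := by
    refine Integrable.mono' (hint1.const_mul (Real.exp (α * cl)))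
      (continuous_norm.aestronglyMeasurable.mul hhsm) ?_
    filter_upwards [hub] with x hx
    rw [Real.norm_eq_abs, abs_mul, abs_of_pos (hhpos x), abs_of_nonneg (norm_nonneg x),
      mul_comm (Real.exp (α * cl))]
    exact mul_le_mul_of_nonneg_left hx (norm_nonneg _)
  set M := ∫ x, ‖x‖ ^ p ∂ρ with hM
  set J := ∫ x, h x ∂ρ with hJ
  set N := ∫ x, h x • x ∂ρ with hN
  have hM0 : 0 ≤ M := integral_nonneg fun x => Real.rpow_nonneg (norm_nonneg _) _
  -- reduce the goal to h
  have hgoal : ‖(∫ x, Real.exp (-α * E x) ∂ρ)⁻¹ • ∫ x, Real.exp (-α * E x) • x ∂ρ‖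
      = ‖J⁻¹ • N‖ := by
    have e1 : ∀ x, Real.exp (-α * E x) = Real.exp (-α * Einf) * h x := by
      intro x
      rw [hh, ← Real.exp_add]; ring_nf
    have e2 : (∫ x, Real.exp (-α * E x) ∂ρ) = Real.exp (-α * Einf) * J := by
      simp_rw [e1]; exact integral_const_mul _ _
    have e3 : (∫ x, Real.exp (-α * E x) • x ∂ρ) = Real.exp (-α * Einf) • N := by
      simp_rw [e1, mul_smul]; exact integral_smul _ _
    have he : Real.exp (-α * Einf) ≠ 0 := (Real.exp_pos _).ne'
    rw [e2, e3, smul_smul, mul_inv, mul_comm (Real.exp (-α * Einf))⁻¹, mul_assoc,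
      inv_mul_cancel₀ he, mul_one]
  rw [hgoal]
  rcases hM0.eq_or_lt with hMz | hMpos
  · -- degenerate case M = 0
    have hz : ∀ᵐ x ∂ρ, ‖x‖ ^ p = 0 := by
      have := (integral_eq_zero_iff_of_nonneg_ae
        (Eventually.of_forall fun x => Real.rpow_nonneg (norm_nonneg _) _) hint).mp hMz.symm
      filter_upwards [this] with x hx using hx
    have hx0 : ∀ᵐ x ∂ρ, h x • x = 0 := by
      filter_upwards [hz] with x hx
      have : ‖x‖ = 0 := by
        by_contra hne
        exact hne ((Real.rpow_eq_zero (norm_nonneg _) hp0.ne').mp hx)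
      have : x = 0 := norm_eq_zero.mp this
      simp [this]
    have : N = 0 := by
      rw [hN]
      exact integral_eq_zero_of_ae hx0
    rw [this, smul_zero, norm_zero, ← hMz, mul_zero,
      Real.zero_rpow (one_div_ne_zero hp0.ne')]
  · -- main case : 0 < M
    obtain ⟨R₀, hR₀def⟩ : ∃ r : ℝ, r = (2*M) ^ ((1:ℝ)/p) := ⟨_, rfl⟩
    have h2M : (0:ℝ) < 2*M := by linarith
    have hR₀ : 0 < R₀ := by rw [hR₀def]; exact Real.rpow_pos_of_pos h2M _
    have hR₀p : R₀ ^ p = 2 * M := by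
      rw [hR₀def, ← Real.rpow_mul h2M.le, one_div, inv_mul_cancel₀ hp0.ne', Real.rpow_one]
    have hR₀sq : (R₀:ℝ) ^ (2:ℕ) = (2*M) ^ ((2:ℝ)/p) := by
      rw [hR₀def, ← Real.rpow_natCast ((2*M) ^ ((1:ℝ)/p)) 2, ← Real.rpow_mul h2M.le]
      norm_num
      ring_nf
    obtain ⟨T, hT⟩ : ∃ t : ℝ, t = cu * (R₀ ^ 2 + 1) := ⟨_, rfl⟩
    have hTpos : 0 < T := by rw [hT]; positivity
    have hsetm : MeasurableSet {x : EuclideanSpace ℝ (Fin d) | ‖x‖ ≤ R₀} :=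
      (isClosed_le continuous_norm continuous_const).measurableSet
    -- Markov inequality
    have hmark : (ρ {x : EuclideanSpace ℝ (Fin d) | ‖x‖ ≤ R₀}ᶜ).toReal ≤ 1/2 := by
      have h1 := mul_meas_ge_le_integral_of_nonneg
        (Eventually.of_forall fun x : EuclideanSpace ℝ (Fin d) =>
          Real.rpow_nonneg (norm_nonneg x) p) hint (2*M)
      have hsub : {x : EuclideanSpace ℝ (Fin d) | ‖x‖ ≤ R₀}ᶜ ⊆
          {x : EuclideanSpace ℝ (Fin d) | 2*M ≤ ‖x‖ ^ p} := by
        intro x hx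
        simp only [Set.mem_compl_iff, Set.mem_setOf_eq, not_le] at hx ⊢
        have h3 : R₀ ^ p ≤ ‖x‖ ^ p := Real.rpow_le_rpow hR₀.le hx.le hp0.le
        rwa [hR₀p] at h3
      have h2 : (ρ {x : EuclideanSpace ℝ (Fin d) | ‖x‖ ≤ R₀}ᶜ).toReal ≤
          (ρ {x : EuclideanSpace ℝ (Fin d) | 2*M ≤ ‖x‖ ^ p}).toReal :=
        ENNReal.toReal_mono (measure_ne_top _ _) (measure_mono hsub)
      have h4 : (0:ℝ) ≤ (ρ {x : EuclideanSpace ℝ (Fin d) | ‖x‖ ≤ R₀}ᶜ).toReal :=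
        ENNReal.toReal_nonneg
      rw [measureReal_def] at h1
      nlinarith [h1, h2, h4]
    have hmass : 1/2 ≤ (ρ {x : EuclideanSpace ℝ (Fin d) | ‖x‖ ≤ R₀}).toReal := by
      have hadd := measure_add_measure_compl (μ := ρ) hsetm
      have h5 : (ρ {x : EuclideanSpace ℝ (Fin d) | ‖x‖ ≤ R₀}).toReal +
          (ρ {x : EuclideanSpace ℝ (Fin d) | ‖x‖ ≤ R₀}ᶜ).toReal = 1 := by
        rw [← ENNReal.toReal_add (measure_ne_top _ _) (measure_ne_top _ _), hadd,
          measure_univ, ENNReal.toReal_one]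
      linarith
    -- lower bound on the denominator J
    have hJ1 : Real.exp (-(α*T)) * (1/2) ≤ J := by
      have hptw : ∀ᵐ x ∂ρ,
          Set.indicator {x : EuclideanSpace ℝ (Fin d) | ‖x‖ ≤ R₀}
            (fun _ => Real.exp (-(α*T))) x ≤ h x := by
        filter_upwards [hae] with x hxD
        by_cases hxB : x ∈ {x : EuclideanSpace ℝ (Fin d) | ‖x‖ ≤ R₀}
        · rw [Set.indicator_of_mem hxB]
          have h1 := hup x hxD
          have h2 : ‖x‖ ^ 2 ≤ R₀ ^ 2 := by
            have h6 : ‖x‖ ≤ R₀ := hxB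
            exact pow_le_pow_left₀ (norm_nonneg _) h6 2
          have h3 : E x - Einf ≤ T := by
            rw [hT]; nlinarith [h1, h2]
          show Real.exp (-(α*T)) ≤ h x
          apply Real.exp_le_exp.mpr
          nlinarith [h3]
        · rw [Set.indicator_of_notMem hxB]; exact (hhpos x).le
      have hii : Integrable (Set.indicator {x : EuclideanSpace ℝ (Fin d) | ‖x‖ ≤ R₀}
          (fun _ => Real.exp (-(α*T)))) ρ := (integrable_const _).indicator hsetm
      have h7 := integral_mono_ae hii hinth hptw
      rw [integral_indicator_const _ hsetm] at h7
      have h8 : Real.exp (-(α*T)) * (1/2) ≤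
          (ρ {x : EuclideanSpace ℝ (Fin d) | ‖x‖ ≤ R₀}).toReal * Real.exp (-(α*T)) := by
        nlinarith [hmass, Real.exp_pos (-(α*T))]
      calc Real.exp (-(α*T)) * (1/2)
          ≤ (ρ {x : EuclideanSpace ℝ (Fin d) | ‖x‖ ≤ R₀}).toReal * Real.exp (-(α*T)) := h8
        _ ≤ J := by rw [smul_eq_mul] at h7; exact h7
    have hJpos : 0 < J := lt_of_lt_of_le (by positivity) hJ1
    -- pointwise splitting of the numerator
    have hTcl : 0 < T/cl + 1 := by
      have := div_pos hTpos hcl; linarith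
    have hkey : ∀ᵐ x ∂ρ, ‖x‖ ^ p * h x ≤
        (T/cl + 1) ^ (p/2) * h x + Real.exp (-(α*T)) * ‖x‖ ^ p := by
      filter_upwards [hae] with x hxD
      by_cases hc : E x - Einf ≤ T
      · have h1 := hlow x hxD
        have h5 : cl * (‖x‖ ^ 2 - 1) ≤ T := le_trans h1 hc
        have h6 : ‖x‖ ^ 2 - 1 ≤ T / cl := (le_div_iff₀' hcl).mpr h5
        have hsq : ‖x‖ ^ 2 ≤ T/cl + 1 := by linarith
        have hxp : ‖x‖ ^ p ≤ (T/cl + 1) ^ (p/2) := by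
          have hb : (0:ℝ) ≤ ‖x‖ ^ 2 := sq_nonneg _
          have h7 : ((‖x‖:ℝ) ^ (2:ℕ)) ^ ((p:ℝ)/2) ≤ (T/cl+1) ^ (p/2) :=
            Real.rpow_le_rpow hb hsq (by positivity)
          calc ‖x‖ ^ p = ((‖x‖:ℝ) ^ (2:ℕ)) ^ ((p:ℝ)/2) := by
                rw [← Real.rpow_natCast ‖x‖ 2, ← Real.rpow_mul (norm_nonneg _)]
                congr 1; ring
            _ ≤ _ := h7
        have h8 := mul_le_mul_of_nonneg_right hxp (hhpos x).le
        have h9 : (0:ℝ) ≤ Real.exp (-(α*T)) * ‖x‖ ^ p := by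
          have := Real.rpow_nonneg (norm_nonneg x) p
          positivity
        linarith
      · push_neg at hc
        have hhb : h x ≤ Real.exp (-(α*T)) := by
          apply Real.exp_le_exp.mpr
          nlinarith [hc]
        have h8 := mul_le_mul_of_nonneg_left hhb (Real.rpow_nonneg (norm_nonneg x) p)
        have h9 : (0:ℝ) ≤ (T/cl+1) ^ (p/2) * h x :=
          mul_nonneg (Real.rpow_nonneg hTcl.le _) (hhpos x).le
        nlinarith [h8, h9]
    set Np := ∫ x, ‖x‖ ^ p * h x ∂ρ with hNpdef
    have hNp0 : 0 ≤ Np := integral_nonneg fun x =>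
      mul_nonneg (Real.rpow_nonneg (norm_nonneg x) p) (hhpos x).le
    have hIsum : Integrable (fun x => (T/cl + 1) ^ (p/2) * h x +
        Real.exp (-(α*T)) * ‖x‖ ^ p) ρ := (hinth.const_mul _).add (hint.const_mul _)
    have hNp : Np ≤ (T/cl + 1) ^ (p/2) * J + Real.exp (-(α*T)) * M := by
      have h1 := integral_mono_ae hintph hIsum hkey
      rwa [integral_add (hinth.const_mul _) (hint.const_mul _), integral_const_mul,
        integral_const_mul] at h1
    -- norm of the consensus point
    have hnormN : ‖N‖ ≤ ∫ x, ‖x‖ * h x ∂ρ := by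
      calc ‖N‖ ≤ ∫ x, ‖h x • x‖ ∂ρ := norm_integral_le_integral_norm _
        _ = ∫ x, ‖x‖ * h x ∂ρ := by
            congr 1; funext x
            rw [norm_smul, Real.norm_eq_abs, abs_of_pos (hhpos x), mul_comm]
    have hXb : ‖J⁻¹ • N‖ ≤ J⁻¹ * ∫ x, ‖x‖ * h x ∂ρ := by
      rw [norm_smul, Real.norm_eq_abs, abs_of_pos (inv_pos.mpr hJpos)]
      exact mul_le_mul_of_nonneg_left hnormN (inv_pos.mpr hJpos).le
    have hjen := jensen_weighted hp (f := fun x : EuclideanSpace ℝ (Fin d) => ‖x‖) (w := h)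
      (Eventually.of_forall fun x => norm_nonneg x) hhpos
      continuous_norm.aestronglyMeasurable hhsm hinth hintph
    rcases le_total M 1 with hM1 | hM1
    · -- small moment case
      have hjen1 := jensen_weighted hp (f := fun x : EuclideanSpace ℝ (Fin d) => ‖x‖)
        (w := fun _ => (1:ℝ)) (Eventually.of_forall fun x => norm_nonneg x)
        (fun _ => one_pos) continuous_norm.aestronglyMeasurable
        aestronglyMeasurable_const (integrable_const 1) (by simpa using hint)
      simp only [mul_one, integral_const, measure_univ, probReal_univ, ENNReal.toReal_one, one_smul,
        Real.one_rpow] at hjen1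
      -- hjen1 : ∫ ‖x‖ ≤ M ^ (1/p)
      have hb1 : ∫ x, ‖x‖ * h x ∂ρ ≤ Real.exp (α*cl) * ∫ x, ‖x‖ ∂ρ := by
        have h1 : ∀ᵐ x ∂ρ, ‖x‖ * h x ≤ Real.exp (α*cl) * ‖x‖ := by
          filter_upwards [hub] with x hx
          rw [mul_comm (Real.exp (α*cl))]
          exact mul_le_mul_of_nonneg_left hx (norm_nonneg x)
        have h2 := integral_mono_ae hinthn (hint1.const_mul _) h1
        rwa [integral_const_mul] at h2
      have hTb : T ≤ 5 * cu := by
        have h1 : (2*M) ^ ((2:ℝ)/p) ≤ (2:ℝ) ^ ((2:ℝ)/p) :=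
          Real.rpow_le_rpow h2M.le (by linarith) (by positivity)
        have h2 : (2:ℝ) ^ ((2:ℝ)/p) ≤ (2:ℝ) ^ (2:ℝ) := by
          apply Real.rpow_le_rpow_of_exponent_le one_le_two
          rw [div_le_iff₀ hp0]; nlinarith
        have h3 : (2:ℝ) ^ (2:ℝ) = 4 := by
          rw [show (2:ℝ) = ((2:ℕ):ℝ) by norm_num, Real.rpow_natCast]; norm_num
        have h4 : R₀ ^ 2 ≤ 4 := by rw [hR₀sq]; linarith
        rw [hT]; nlinarith
      have hJinv : J⁻¹ ≤ 2 * Real.exp (α*T) := by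
        have h1 : (0:ℝ) < Real.exp (-(α*T)) * (1/2) := by positivity
        have h2 := inv_anti₀ h1 hJ1
        have h3 : (Real.exp (-(α*T)) * (1/2))⁻¹ = 2 * Real.exp (α*T) := by
          rw [Real.exp_neg, mul_inv, inv_inv]; ring
        rw [h3] at h2; exact h2
      have hchain : ‖J⁻¹ • N‖ ≤ cs * M ^ ((1:ℝ)/p) := by
        have hInn : (0:ℝ) ≤ ∫ x, ‖x‖ * h x ∂ρ :=
          integral_nonneg fun x => mul_nonneg (norm_nonneg x) (hhpos x).le
        have c1 : J⁻¹ * ∫ x, ‖x‖ * h x ∂ρ ≤ (2 * Real.exp (α*T)) * (Real.exp (α*cl) * M ^ ((1:ℝ)/p)) := by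
          apply mul_le_mul hJinv _ hInn (by positivity)
          calc ∫ x, ‖x‖ * h x ∂ρ ≤ Real.exp (α*cl) * ∫ x, ‖x‖ ∂ρ := hb1
            _ ≤ Real.exp (α*cl) * M ^ ((1:ℝ)/p) :=
                mul_le_mul_of_nonneg_left hjen1 (Real.exp_pos _).le
        have c2 : (2 * Real.exp (α*T)) * (Real.exp (α*cl) * M ^ ((1:ℝ)/p)) ≤ cs * M ^ ((1:ℝ)/p) := by
          rw [hcs]
          have h1 : Real.exp (α*T) * Real.exp (α*cl) ≤ Real.exp (α*(cl + 5*cu)) := by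
            rw [← Real.exp_add, Real.exp_le_exp]
            have := mul_le_mul_of_nonneg_left hTb hα.le
            nlinarith [this]
          have h2 : (0:ℝ) ≤ M ^ ((1:ℝ)/p) := Real.rpow_nonneg hM0 _
          nlinarith [h1, h2, Real.exp_pos (α*T), Real.exp_pos (α*cl)]
        exact le_trans hXb (le_trans c1 c2)
      have hfin : cs * M ^ ((1:ℝ)/p) = (cs ^ p * M) ^ ((1:ℝ)/p) := by
        rw [Real.mul_rpow (Real.rpow_nonneg hcs0.le p) hM0, ← Real.rpow_mul hcs0.le,
          mul_one_div, div_self hp0.ne', Real.rpow_one]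
      rw [hfin] at hchain
      apply le_trans hchain
      apply Real.rpow_le_rpow (mul_nonneg (Real.rpow_nonneg hcs0.le p) hM0) _
        (one_div_nonneg.mpr hp0.le)
      apply mul_le_mul_of_nonneg_right _ hM0
      rw [hc₁]; nlinarith [Real.rpow_nonneg ha0.le (p/2)]
    · -- large moment case
      have hMq1 : (1:ℝ) ≤ M ^ ((2:ℝ)/p) := Real.one_le_rpow hM1 (by positivity)
      -- combine Jensen and the bounds
      have hstep : J⁻¹ * ∫ x, ‖x‖ * h x ∂ρ ≤ (Np / J) ^ ((1:ℝ)/p) := by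
        have h1 : J⁻¹ * ∫ x, ‖x‖ * h x ∂ρ ≤ J⁻¹ * (Np ^ ((1:ℝ)/p) * J ^ (1 - (1:ℝ)/p)) := by
          apply mul_le_mul_of_nonneg_left _ (inv_pos.mpr hJpos).le
          simpa [one_div] using hjen
        have h2 : J⁻¹ * (Np ^ ((1:ℝ)/p) * J ^ (1 - (1:ℝ)/p)) = (Np / J) ^ ((1:ℝ)/p) := by
          rw [Real.div_rpow hNp0 hJpos.le]
          rw [show J⁻¹ = J ^ (-1:ℝ) from (Real.rpow_neg_one J).symm]
          rw [mul_comm (Np ^ ((1:ℝ)/p)), ← mul_assoc, ← Real.rpow_add hJpos]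
          rw [show (-1:ℝ) + (1 - 1/p) = -(1/p) by ring, Real.rpow_neg hJpos.le,
            div_eq_mul_inv, mul_comm]
          ring
        rw [h2] at h1; exact h1
      have hNpJ : Np / J ≤ (a ^ (p/2) + 2) * M := by
        rw [div_le_iff₀ hJpos]
        have h1 : Real.exp (-(α*T)) * M ≤ 2 * M * J := by
          have h2 : Real.exp (-(α*T)) ≤ 2 * J := by
            nlinarith [hJ1]
          calc Real.exp (-(α*T)) * M ≤ (2*J) * M :=
                mul_le_mul_of_nonneg_right h2 hM0
            _ = 2 * M * J := by ring
        have h3 : (T/cl + 1) ^ (p/2) ≤ a ^ (p/2) * M := by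
          have h4 : T/cl + 1 ≤ a * M ^ ((2:ℝ)/p) := by
            have h5 : R₀ ^ 2 = (2:ℝ) ^ ((2:ℝ)/p) * M ^ ((2:ℝ)/p) := by
              rw [hR₀sq, Real.mul_rpow (by norm_num) hM0]
            have h6 : T/cl + 1 = (cu/cl) * (R₀ ^ 2 + 1) + 1 := by
              rw [hT]; field_simp
            rw [h6, h5, ha]
            have h7 : (0:ℝ) < cu/cl := by positivity
            nlinarith [hMq1, h7, Real.rpow_nonneg (show (0:ℝ) ≤ 2 by norm_num) ((2:ℝ)/p)]
          calc (T/cl + 1) ^ (p/2) ≤ (a * M ^ ((2:ℝ)/p)) ^ (p/2) :=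
                Real.rpow_le_rpow hTcl.le h4 (by positivity)
            _ = a ^ (p/2) * M := by
                rw [Real.mul_rpow ha0.le (Real.rpow_nonneg hM0 _), ← Real.rpow_mul hM0,
                  show (2:ℝ)/p * (p/2) = 1 by field_simp, Real.rpow_one]
        calc Np ≤ (T/cl + 1) ^ (p/2) * J + Real.exp (-(α*T)) * M := hNp
          _ ≤ a ^ (p/2) * M * J + 2 * M * J := by
              have := mul_le_mul_of_nonneg_right h3 hJpos.le
              linarith [this, h1]
          _ = (a ^ (p/2) + 2) * M * J := by ring
      have hfin : (Np / J) ^ ((1:ℝ)/p) ≤ (c₁ * M) ^ ((1:ℝ)/p) := by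
        apply Real.rpow_le_rpow (div_nonneg hNp0 hJpos.le) _ (by positivity)
        apply le_trans hNpJ
        apply mul_le_mul_of_nonneg_right _ hM0
        rw [hc₁]; nlinarith [Real.rpow_pos_of_pos hcs0 p]
      calc ‖J⁻¹ • N‖ ≤ J⁻¹ * ∫ x, ‖x‖ * h x ∂ρ := hXb
        _ ≤ (Np / J) ^ ((1:ℝ)/p) := hstep
        _ ≤ (c₁ * M) ^ ((1:ℝ)/p) := hfin
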